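/- arXiv:2604.14127 — 4 statements merged into one kernel-verified Lean document; each statement's English description precedes it below -/
import Mathlib

section
/- Let $a_1, \dots, a_n$ be holomorphic functions on a connected open subset $U \subseteq \mathbb{C}$. If the Wronskian determinant $\operatorname{Wr}(a_1, \dots, a_n)$ vanishes identically on $U$, then the functions $a_1, \dots, a_n$ are linearly dependent over $\mathbb{C}$. -/
open scoped BigOperators
open Matrix

lemma auxW_iteratedDeriv_analytic {f : ℂ → ℂ} {U : Set ℂ} (hf : AnalyticOnNhd ℂ f U) :
    ∀ j : ℕ, AnalyticOnNhd ℂ (iteratedDeriv j f) U := by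
  intro j
  induction j with
  | zero => simpa [iteratedDeriv_zero] using hf
  | succ k ih => rw [iteratedDeriv_succ]; exact ih.deriv

lemma auxW_det_analytic {m : ℕ} {U : Set ℂ} (f : Fin m → Fin m → ℂ → ℂ)
    (hf : ∀ i j, AnalyticOnNhd ℂ (f i j) U) :
    AnalyticOnNhd ℂ (fun z => Matrix.det (Matrix.of fun i j => f i j z)) U := by
  have h : (fun z => Matrix.det (Matrix.of fun i j => f i j z))
      = fun z => ∑ σ : Equiv.Perm (Fin m),
          ((Equiv.Perm.sign σ : ℤ) : ℂ) * ∏ i, f (σ i) i z := by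
    funext z
    rw [Matrix.det_apply]
    simp [Units.smul_def, zsmul_eq_mul]
  rw [h]
  exact Finset.analyticOnNhd_fun_sum _ fun σ _ =>
    analyticOnNhd_const.mul (Finset.analyticOnNhd_fun_prod _ fun i _ => hf (σ i) i)

lemma auxW_vecMul_zero {m : ℕ} (M : Matrix (Fin m) (Fin m) ℂ) (hM : M.det ≠ 0)
    (v : Fin m → ℂ) (hv : ∀ j, ∑ i, v i * M i j = 0) : v = 0 := by
  by_contra h
  exact hM (Matrix.exists_vecMul_eq_zero_iff.mp ⟨v, h, funext fun j => by
    simpa [Matrix.vecMul, dotProduct] using hv j⟩)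

lemma auxW_const_of_deriv_zero {s : Set ℂ} (hs : Convex ℝ s) (hso : IsOpen s)
    (f : ℂ → ℂ) (hf : DifferentiableOn ℂ f s) (hf' : ∀ x ∈ s, deriv f x = 0)
    {x y : ℂ} (hx : x ∈ s) (hy : y ∈ s) : f x = f y := by
  apply hs.is_const_of_fderivWithin_eq_zero hf _ hx hy
  intro z hz
  rw [fderivWithin_of_isOpen hso hz]
  apply ContinuousLinearMap.ext_ring
  rw [fderiv_apply_one_eq_deriv, hf' z hz]
  rfl

/-- **Vanishing Wronskian implies linear dependence.**
If `a 0, …, a (n-1)` are holomorphic on a connected open set `U ⊆ ℂ` and the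
Wronskian determinant `det (a i ^{(j)})_{i,j}` (the `(i,j)` entry being the `j`-th
derivative of `a i`, `0 ≤ j ≤ n-1`) vanishes identically on `U`, then the functions
are linearly dependent over `ℂ`: there is a nonzero vector of constants `c` with
`∑ i, c i • a i ≡ 0` on `U`. -/
theorem stmt_1 (n : ℕ) (hn : 1 ≤ n) (U : Set ℂ) (hUo : IsOpen U) (hUc : IsConnected U)
    (a : Fin n → ℂ → ℂ) (ha : ∀ i, AnalyticOnNhd ℂ (a i) U)
    (hW : ∀ z ∈ U,
      Matrix.det (Matrix.of fun i j : Fin n => iteratedDeriv (j : ℕ) (a i) z) = 0) :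
    ∃ c : Fin n → ℂ, c ≠ 0 ∧ ∀ z ∈ U, ∑ i, c i * a i z = 0 := by
  induction n, hn using Nat.le_induction with
  | base =>
    refine ⟨fun _ => 1, ?_, ?_⟩
    · intro h
      simpa using congrFun h 0
    · intro z hz
      have h := hW z hz
      rw [Matrix.det_fin_one] at h
      simpa using h
  | succ n hn1 IH =>
    by_cases hWsub : ∀ z ∈ U, Matrix.det
        (Matrix.of fun i j : Fin n => iteratedDeriv (j : ℕ) (a i.castSucc) z) = 0
    · obtain ⟨c, hc0, hc⟩ := IH (fun i => a i.castSucc) (fun i => ha i.castSucc) hWsub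
      refine ⟨Fin.snoc c 0, ?_, ?_⟩
      · intro h
        apply hc0
        funext i
        simpa using congrFun h i.castSucc
      · intro z hz
        rw [Fin.sum_univ_castSucc]
        simpa [Fin.snoc_castSucc, Fin.snoc_last] using hc z hz
    · push_neg at hWsub
      obtain ⟨z₀, hz₀U, hz₀W⟩ := hWsub
      set M : ℂ → Matrix (Fin n) (Fin n) ℂ :=
        fun z => Matrix.of fun i j : Fin n => iteratedDeriv (j : ℕ) (a i.castSucc) z with hMdef
      set Wr : ℂ → ℂ := fun z => (M z).det with hWrdef
      have hWr_an : AnalyticOnNhd ℂ Wr U :=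
        auxW_det_analytic _ (fun i j => auxW_iteratedDeriv_analytic (ha i.castSucc) j)
      set V : Set ℂ := U ∩ Wr ⁻¹' ({0}ᶜ) with hVdef
      have hVU : V ⊆ U := Set.inter_subset_left
      have hVo : IsOpen V :=
        hWr_an.continuousOn.isOpen_inter_preimage hUo isOpen_compl_singleton
      have hz₀V : z₀ ∈ V := ⟨hz₀U, by simpa [hWrdef, hMdef] using hz₀W⟩
      have hVne : ∀ z ∈ V, Wr z ≠ 0 := fun z hz => by simpa using hz.2
      set bb : ℂ → Fin n → ℂ := fun z j => iteratedDeriv (j : ℕ) (a (Fin.last n)) z with hbbdef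
      set D : ℂ → Fin n → ℂ :=
        fun z i => (Wr z)⁻¹ * Matrix.cramer (M z)ᵀ (bb z) i with hDdef
      have hMker : ∀ z ∈ V, ∀ v : Fin n → ℂ, (∀ j, ∑ i, v i * M z i j = 0) → v = 0 :=
        fun z hz v hv => auxW_vecMul_zero (M z) (hVne z hz) v hv
      -- D solves the linear system on V for columns j < n
      have hD1 : ∀ z ∈ V, ∀ j : Fin n, ∑ i, D z i * M z i j = bb z j := by
        intro z hz j
        have h1 : ∑ i, D z i * M z i j
            = (Wr z)⁻¹ * ((M z)ᵀ *ᵥ Matrix.cramer (M z)ᵀ (bb z)) j := by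
          simp only [Matrix.mulVec, dotProduct, Matrix.transpose_apply, Finset.mul_sum,
            hDdef]
          exact Finset.sum_congr rfl fun i _ => by ring
        rw [h1, Matrix.mulVec_cramer, Matrix.det_transpose]
        simp only [Pi.smul_apply, smul_eq_mul]
        rw [← mul_assoc, inv_mul_cancel₀ (hVne z hz), one_mul]
      -- combined relation for all k ≤ n
      have hD12 : ∀ z ∈ V, ∀ k : ℕ, k ≤ n →
          ∑ i, D z i * iteratedDeriv k (a i.castSucc) z
            = iteratedDeriv k (a (Fin.last n)) z := by
        intro z hz k hk
        rcases lt_or_eq_of_le hk with hk | hk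
        · exact hD1 z hz ⟨k, hk⟩
        · rw [hk]
          have hdet : (Matrix.of fun i j : Fin (n+1) =>
              iteratedDeriv (j : ℕ) (a i) z).det = 0 := hW z (hVU hz)
          obtain ⟨v, hv0, hv⟩ := Matrix.exists_vecMul_eq_zero_iff.mpr hdet
          have hvcol : ∀ j : Fin (n+1),
              ∑ i : Fin (n+1), v i * iteratedDeriv (j : ℕ) (a i) z = 0 := by
            intro j
            have h := congrFun hv j
            simpa [Matrix.vecMul, dotProduct] using h
          have hvlast : v (Fin.last n) ≠ 0 := by
            intro h0
            have hsub : (fun i : Fin n => v i.castSucc) = 0 := by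
              apply hMker z hz
              intro j
              have h := hvcol j.castSucc
              rw [Fin.sum_univ_castSucc, h0, zero_mul, add_zero] at h
              simpa [hMdef] using h
            apply hv0
            funext i
            refine Fin.lastCases h0 (fun i => ?_) i
            exact congrFun hsub i
          set e : Fin n → ℂ := fun i => -(v i.castSucc) / v (Fin.last n) with hedef
          have he : ∀ j : Fin (n+1),
              ∑ i : Fin n, e i * iteratedDeriv (j : ℕ) (a i.castSucc) z
                = iteratedDeriv (j : ℕ) (a (Fin.last n)) z := by
            intro j
            have h := hvcol j
            rw [Fin.sum_univ_castSucc] at h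
            have hsum : ∑ i : Fin n, v i.castSucc * iteratedDeriv (j : ℕ) (a i.castSucc) z
                = -(v (Fin.last n) * iteratedDeriv (j : ℕ) (a (Fin.last n)) z) :=
              eq_neg_of_add_eq_zero_left h
            calc ∑ i : Fin n, e i * iteratedDeriv (j : ℕ) (a i.castSucc) z
                = (v (Fin.last n))⁻¹ *
                    -∑ i : Fin n, v i.castSucc * iteratedDeriv (j : ℕ) (a i.castSucc) z := by
                  rw [← Finset.sum_neg_distrib, Finset.mul_sum]
                  refine Finset.sum_congr rfl fun i _ => ?_
                  simp only [hedef]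
                  field_simp
              _ = iteratedDeriv (j : ℕ) (a (Fin.last n)) z := by
                  rw [hsum, neg_neg, ← mul_assoc, inv_mul_cancel₀ hvlast, one_mul]
          have heD : e = D z := by
            have h0 : ∀ j : Fin n, ∑ i, (e i - D z i) * M z i j = 0 := by
              intro j
              have h1 := he j.castSucc
              have h2 := hD1 z hz j
              have h3 : ∑ i, e i * M z i j = bb z j := by
                simpa [hMdef, hbbdef] using h1
              simp only [sub_mul]
              rw [Finset.sum_sub_distrib, h3, h2, sub_self]
            have h4 := hMker z hz _ h0
            funext i
            have h5 := congrFun h4 i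
            simpa [sub_eq_zero] using h5
          have h6 := he (Fin.last n)
          rw [heD] at h6
          simpa using h6
      -- analyticity of D on V
      have hDan : ∀ i, AnalyticOnNhd ℂ (fun z => D z i) V := by
        intro i
        simp only [hDdef]
        apply AnalyticOnNhd.mul
        · exact (hWr_an.mono hVU).inv hVne
        · have h : (fun z => Matrix.cramer (M z)ᵀ (bb z) i)
              = fun z => Matrix.det (Matrix.of fun k j : Fin n =>
                  if j = i then bb z k else M z j k) := by
            funext z
            rw [Matrix.cramer_apply]
            congr 1
            ext k j
            by_cases hji : j = i <;> simp [Matrix.updateCol_apply, hji]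
          rw [h]
          apply auxW_det_analytic
          intro k j
          by_cases hji : j = i
          · simpa [hji, hbbdef] using
              (auxW_iteratedDeriv_analytic (ha (Fin.last n)) (k : ℕ)).mono hVU
          · simpa [hji, hMdef] using
              (auxW_iteratedDeriv_analytic (ha j.castSucc) (k : ℕ)).mono hVU
      -- derivative of D vanishes on V
      have hD' : ∀ z ∈ V, ∀ i, deriv (fun w => D w i) z = 0 := by
        intro z hz
        have key : ∀ j : Fin n, ∑ i, deriv (fun w => D w i) z * M z i j = 0 := by
          intro j
          set G : ℂ → ℂ := fun w => (∑ i, D w i * iteratedDeriv (j : ℕ) (a i.castSucc) w)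
              - iteratedDeriv (j : ℕ) (a (Fin.last n)) w with hGdef
          have hG0 : ∀ w ∈ V, G w = 0 := by
            intro w hw
            simp only [hGdef]
            rw [sub_eq_zero]
            exact hD12 w hw (j : ℕ) j.isLt.le
          have hGev : G =ᶠ[nhds z] fun _ => 0 :=
            Filter.eventuallyEq_of_mem (hVo.mem_nhds hz) hG0
          have hderiv0 : deriv G z = 0 := by
            rw [hGev.deriv_eq]; simp
          have hhas : HasDerivAt G
              ((∑ i, (deriv (fun w => D w i) z * iteratedDeriv (j : ℕ) (a i.castSucc) z
                + D z i * iteratedDeriv ((j : ℕ)+1) (a i.castSucc) z))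
                - iteratedDeriv ((j : ℕ)+1) (a (Fin.last n)) z) z := by
            apply HasDerivAt.sub
            · apply HasDerivAt.fun_sum
              intro i _
              apply HasDerivAt.mul
              · exact ((hDan i z hz).differentiableAt).hasDerivAt
              · have h1 := ((auxW_iteratedDeriv_analytic (ha i.castSucc) (j : ℕ)) z
                  (hVU hz)).differentiableAt.hasDerivAt
                have h2 : iteratedDeriv ((j : ℕ)+1) (a i.castSucc) z
                    = deriv (iteratedDeriv (j : ℕ) (a i.castSucc)) z := by
                  rw [iteratedDeriv_succ]
                rw [h2]
                exact h1
            · have h1 := ((auxW_iteratedDeriv_analytic (ha (Fin.last n)) (j : ℕ)) z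
                (hVU hz)).differentiableAt.hasDerivAt
              have h2 : iteratedDeriv ((j : ℕ)+1) (a (Fin.last n)) z
                  = deriv (iteratedDeriv (j : ℕ) (a (Fin.last n))) z := by
                rw [iteratedDeriv_succ]
              rw [h2]
              exact h1
          have hval := hhas.deriv
          rw [hderiv0] at hval
          have hsum2 : ∑ i, D z i * iteratedDeriv ((j : ℕ)+1) (a i.castSucc) z
              = iteratedDeriv ((j : ℕ)+1) (a (Fin.last n)) z :=
            hD12 z hz ((j : ℕ)+1) (Nat.succ_le_of_lt j.isLt)
          rw [Finset.sum_add_distrib, hsum2, add_sub_cancel_right] at hval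
          simpa [hMdef] using hval.symm
        have hker := hMker z hz _ key
        intro i
        exact congrFun hker i
      obtain ⟨r, hr, hball⟩ := Metric.isOpen_iff.mp hVo z₀ hz₀V
      have hDconst : ∀ i, ∀ z ∈ Metric.ball z₀ r, D z i = D z₀ i := by
        intro i z hz
        exact auxW_const_of_deriv_zero (convex_ball z₀ r) Metric.isOpen_ball _
          (fun w hw => ((hDan i w (hball hw)).differentiableAt).differentiableWithinAt)
          (fun w hw => hD' w (hball hw) i) hz (Metric.mem_ball_self hr)
      set g : ℂ → ℂ := fun z => a (Fin.last n) z - ∑ i, D z₀ i * a i.castSucc z with hgdef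
      have hg_an : AnalyticOnNhd ℂ g U :=
        (ha (Fin.last n)).sub (Finset.analyticOnNhd_fun_sum _ fun i _ =>
          analyticOnNhd_const.mul (ha i.castSucc))
      have hg0 : ∀ w ∈ Metric.ball z₀ r, g w = 0 := by
        intro w hw
        have h := hD12 w (hball hw) 0 (Nat.zero_le n)
        simp only [iteratedDeriv_zero] at h
        simp only [hgdef]
        rw [sub_eq_zero, ← h]
        exact (Finset.sum_congr rfl fun i _ => by rw [hDconst i w hw]).symm
      have hgU : Set.EqOn g 0 U :=
        hg_an.eqOn_zero_of_preconnected_of_eventuallyEq_zero hUc.isPreconnected hz₀U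
          (Filter.eventuallyEq_of_mem (Metric.isOpen_ball.mem_nhds (Metric.mem_ball_self hr)) hg0)
      refine ⟨Fin.snoc (fun i => -(D z₀ i)) 1, ?_, ?_⟩
      · intro h
        have h1 := congrFun h (Fin.last n)
        simp [Fin.snoc_last] at h1
      · intro z hz
        rw [Fin.sum_univ_castSucc]
        have hgz := hgU hz
        simp only [Pi.zero_apply, hgdef] at hgz
        simp only [Fin.snoc_castSucc, Fin.snoc_last, one_mul]
        have h1 : ∑ i, -(D z₀ i) * a i.castSucc z = -∑ i, D z₀ i * a i.castSucc z := by
          rw [← Finset.sum_neg_distrib]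
          exact Finset.sum_congr rfl fun i _ => by ring
        rw [h1]
        linear_combination hgz
end

section
/- Let $a_1, \dots, a_n$ be holomorphic functions on a disc $U \subset \mathbb{C}$ centered at $0$ such that the Wronskian $\operatorname{Wr}(a_1,\dots,a_n)$ has a zero of order exactly $1$ at $z = 0$. Then the vectors $\boldsymbol{a}(0), \boldsymbol{a}'(0), \dots, \boldsymbol{a}^{(n-2)}(0)$ are linearly independent in $\mathbb{C}^n$, where $\boldsymbol{a}(z) = (a_1(z),\dots,a_n(z))$. -/
open Finset Filter Topology

/-- A matrix whose `ι`-th column lies in the span of the other columns has zero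
determinant. -/
lemma det_eq_zero_of_col_mem_span {n : ℕ} (M : Matrix (Fin n) (Fin n) ℂ) (ι : Fin n)
    (hm : (fun r => M r ι) ∈ Submodule.span ℂ
      (Set.range fun j : {j : Fin n // j ≠ ι} => fun r => M r (j : Fin n))) :
    M.det = 0 := by
  rw [Submodule.mem_span_range_iff_exists_fun] at hm
  obtain ⟨c, hc⟩ := hm
  refine Matrix.exists_mulVec_eq_zero_iff.mp ?_
  refine ⟨fun j => if hj : j = ι then -1 else c ⟨j, hj⟩, ?_, ?_⟩
  · intro h
    have := congrFun h ι
    simp at this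
  · funext r
    have hcr := congrFun hc r
    simp only [Finset.sum_apply, Pi.smul_apply, smul_eq_mul] at hcr
    have hsub : ∑ j ∈ Finset.univ.erase ι, M r j * (if hj : j = ι then (-1:ℂ) else c ⟨j, hj⟩)
        = ∑ j : {j : Fin n // j ≠ ι}, c j * M r (j : Fin n) := by
      rw [Finset.sum_subtype (p := fun j => j ≠ ι) (Finset.univ.erase ι)
        (fun j => by simp [Finset.mem_erase])]
      refine Finset.sum_congr rfl fun j _ => ?_
      rw [dif_neg j.2]; ring
    have hmv : (M.mulVec fun j => if hj : j = ι then (-1:ℂ) else c ⟨j, hj⟩) r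
        = ∑ j, M r j * (if hj : j = ι then (-1:ℂ) else c ⟨j, hj⟩) := rfl
    rw [hmv, ← Finset.add_sum_erase _ _ (Finset.mem_univ ι), hsub, hcr]
    simp

/-- Updating a column by adding an element of the span of the other columns does not
change the determinant. -/
lemma det_updateColumn_of_sub_mem_span {n : ℕ} (A : Matrix (Fin n) (Fin n) ℂ) (ι : Fin n)
    (u : Fin n → ℂ)
    (hu : (fun r => u r - A r ι) ∈ Submodule.span ℂ
      (Set.range fun j : {j : Fin n // j ≠ ι} => fun r => A r (j : Fin n))) :
    (A.updateCol ι u).det = A.det := by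
  have h1 : u = (fun r => A r ι) + (fun r => u r - A r ι) := by funext r; simp
  rw [h1, Matrix.det_updateCol_add]
  have h2 : (A.updateCol ι (fun r => u r - A r ι)).det = 0 := by
    apply det_eq_zero_of_col_mem_span _ ι
    have hfeq : (fun j : {j : Fin n // j ≠ ι} =>
        fun r => (A.updateCol ι (fun r => u r - A r ι)) r (j : Fin n))
        = (fun j : {j : Fin n // j ≠ ι} => fun r => A r (j : Fin n)) := by
      funext j r
      rw [Matrix.updateCol_apply, if_neg j.2]
    have hcols : (Set.range fun j : {j : Fin n // j ≠ ι} =>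
        fun r => (A.updateCol ι (fun r => u r - A r ι)) r (j : Fin n))
        = (Set.range fun j : {j : Fin n // j ≠ ι} => fun r => A r (j : Fin n)) := by
      rw [hfeq]
    have hcol : (fun r => (A.updateCol ι (fun r => u r - A r ι)) r ι)
        = fun r => u r - A r ι := by
      funext r; rw [Matrix.updateCol_apply, if_pos rfl]
    rw [hcol, hcols]
    exact hu
  rw [h2, add_zero, Matrix.updateCol_eq_self]

/-- **Simple zero of the Wronskian forces independence of the first `n-1` derivative
vectors.**  Let `a 0, …, a (n-1)` be holomorphic on a disc `U` centered at `0` and let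
`W z = det (a i ^{(j)}(z))_{i,j}` be their Wronskian.  If `W` has a zero of order
exactly `1` at `z = 0` (i.e. `W 0 = 0` and `W' 0 ≠ 0`), then the vectors
`𝐚(0), 𝐚'(0), …, 𝐚^{(n-2)}(0) ∈ ℂⁿ` are linearly independent, where
`𝐚^{(k)}(0) = (iteratedDeriv k (a i) 0)_i`. -/
theorem stmt_2 (n : ℕ) (hn : 2 ≤ n) (r : ℝ) (hr : 0 < r)
    (a : Fin n → ℂ → ℂ)
    (ha : ∀ i, AnalyticOnNhd ℂ (a i) (Metric.ball (0 : ℂ) r))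
    (W : ℂ → ℂ)
    (hWdef : W = fun z =>
      Matrix.det (Matrix.of fun i j : Fin n => iteratedDeriv (j : ℕ) (a i) z))
    (hW0 : W 0 = 0) (hW1 : deriv W 0 ≠ 0) :
    LinearIndependent ℂ
      (fun k : Fin (n - 1) => fun i : Fin n => iteratedDeriv (k : ℕ) (a i) 0) := by
  classical
  by_contra hdep
  rw [Fintype.not_linearIndependent_iff] at hdep
  obtain ⟨g, hg, i, hgi⟩ := hdep
  -- the family of derivative-vectors
  set v : Fin (n - 1) → Fin n → ℂ := fun k => fun s => iteratedDeriv (k : ℕ) (a s) 0 with hv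
  have hin : (i : ℕ) < n - 1 := i.2
  set ι : Fin n := ⟨(i : ℕ), by omega⟩ with hι
  set c : Fin (n - 1) → ℂ := fun k => if k = i then 0 else -(g k) / (g i) with hcdef
  -- express v i as a combination of the other vectors
  have h2 : ∑ k ∈ Finset.univ.erase i, g k • v k = -(g i • v i) := by
    have := Finset.add_sum_erase Finset.univ (fun k => g k • v k) (Finset.mem_univ i)
    rw [hg] at this
    linear_combination (norm := module) this
  have hvi : v i = ∑ k, c k • v k := by
    rw [← Finset.add_sum_erase _ _ (Finset.mem_univ i)]
    have hci : c i = 0 := if_pos rfl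
    rw [hci, zero_smul, zero_add]
    have : ∑ k ∈ Finset.univ.erase i, c k • v k
        = (-(g i)⁻¹) • ∑ k ∈ Finset.univ.erase i, g k • v k := by
      rw [Finset.smul_sum]
      refine Finset.sum_congr rfl fun k hk => ?_
      rw [smul_smul]
      congr 1
      simp only [hcdef, if_neg (Finset.ne_of_mem_erase hk)]
      rw [div_eq_mul_inv]
      ring
    rw [this, h2, smul_neg, smul_smul]
    simp [inv_mul_cancel₀ hgi]
  have hvir : ∀ s : Fin n, iteratedDeriv (i : ℕ) (a s) 0
      = ∑ k, c k * iteratedDeriv (k : ℕ) (a s) 0 := by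
    intro s
    have := congrFun hvi s
    simpa [hv, Finset.sum_apply] using this
  -- analyticity of iterated derivatives at 0
  have hball : (0 : ℂ) ∈ Metric.ball (0 : ℂ) r := by simp [hr]
  have hAnal : ∀ (m : ℕ) (s : Fin n), AnalyticAt ℂ (iteratedDeriv m (a s)) 0 := by
    intro m s
    rw [iteratedDeriv_eq_iterate]
    exact (ha s).iterated_deriv m 0 hball
  have hDeriv : ∀ (m : ℕ) (s : Fin n),
      HasDerivAt (iteratedDeriv m (a s)) (iteratedDeriv (m + 1) (a s) 0) 0 := by
    intro m s
    rw [iteratedDeriv_succ]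
    exact (hAnal m s).differentiableAt.hasDerivAt
  -- main objects
  set M : ℂ → Matrix (Fin n) (Fin n) ℂ :=
    fun z => Matrix.of fun s j => iteratedDeriv (j : ℕ) (a s) z with hM
  set b : ℂ → Fin n → ℂ :=
    fun z s => iteratedDeriv (i : ℕ) (a s) z - ∑ k, c k * iteratedDeriv (k : ℕ) (a s) z with hb
  have hb0 : ∀ s, b 0 s = 0 := by
    intro s
    simp only [hb]
    rw [hvir s]
    ring
  set D : Fin n → ℂ := fun s =>
    iteratedDeriv ((i : ℕ) + 1) (a s) 0 - ∑ k, c k * iteratedDeriv ((k : ℕ) + 1) (a s) 0 with hD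
  have hbD : ∀ s, HasDerivAt (fun z => b z s) (D s) 0 := by
    intro s
    exact (hDeriv (i : ℕ) s).sub
      (HasDerivAt.fun_sum fun k _ => (hDeriv (k : ℕ) s).const_mul (c k))
  set hfun : ℂ → Fin n → ℂ := fun z => if z = 0 then D else z⁻¹ • b z with hhfun
  set F : ℂ → ℂ := fun z => ((M z).updateCol ι (hfun z)).det with hF
  -- the span of the columns other than ι (at the point 0)
  set P : Submodule ℂ (Fin n → ℂ) := Submodule.span ℂ
    (Set.range fun j : {j : Fin n // j ≠ ι} =>
      fun s => iteratedDeriv (((j : Fin n)) : ℕ) (a s) 0) with hP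
  have hmemP : ∀ m : Fin n, (fun s => iteratedDeriv ((m : ℕ)) (a s) 0) ∈ P := by
    intro m
    by_cases hm : m = ι
    · subst hm
      have : (fun s => iteratedDeriv ((ι : ℕ)) (a s) 0) = v i := rfl
      rw [this, hvi]
      refine Submodule.sum_mem _ fun k _ => ?_
      by_cases hk : k = i
      · subst hk
        have hci : c k = 0 := if_pos rfl
        rw [hci, zero_smul]
        exact Submodule.zero_mem _
      · refine Submodule.smul_mem _ _ (Submodule.subset_span ?_)
        refine ⟨⟨⟨(k : ℕ), by omega⟩, ?_⟩, rfl⟩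
        intro hcontra
        apply hk
        have := congrArg Fin.val hcontra
        simp only [hι] at this
        exact Fin.ext this
    · exact Submodule.subset_span ⟨⟨m, hm⟩, rfl⟩
  have hDP : D ∈ P := by
    have hDalt : D = (fun s => iteratedDeriv ((i : ℕ) + 1) (a s) 0)
        - ∑ k : Fin (n - 1), c k • (fun s => iteratedDeriv ((k : ℕ) + 1) (a s) 0) := by
      funext s
      simp [hD, Finset.sum_apply]
    rw [hDalt]
    refine Submodule.sub_mem _ ?_ (Submodule.sum_mem _ fun k _ => Submodule.smul_mem _ _ ?_)
    · exact hmemP ⟨(i : ℕ) + 1, by omega⟩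
    · exact hmemP ⟨(k : ℕ) + 1, by omega⟩
  -- membership of the correction term in the span of the other columns, at every z
  have hcorr : ∀ z : ℂ, (fun s => b z s - (M z) s ι) ∈ Submodule.span ℂ
      (Set.range fun j : {j : Fin n // j ≠ ι} => fun s => (M z) s (j : Fin n)) := by
    intro z
    have heq : (fun s => b z s - (M z) s ι)
        = - ∑ k : Fin (n - 1), c k • (fun s => (M z) s ⟨(k : ℕ), by omega⟩) := by
      funext s
      simp only [hb, hM, Matrix.of_apply, Pi.neg_apply, Finset.sum_apply, Pi.smul_apply,
        smul_eq_mul]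
      have : ((ι : ℕ)) = (i : ℕ) := rfl
      rw [this]
      ring
    rw [heq]
    refine Submodule.neg_mem _ (Submodule.sum_mem _ fun k _ => ?_)
    by_cases hk : k = i
    · subst hk
      have hci : c k = 0 := if_pos rfl
      rw [hci, zero_smul]
      exact Submodule.zero_mem _
    · refine Submodule.smul_mem _ _ (Submodule.subset_span ?_)
      refine ⟨⟨⟨(k : ℕ), by omega⟩, ?_⟩, rfl⟩
      intro hcontra
      apply hk
      have := congrArg Fin.val hcontra
      simp only [hι] at this
      exact Fin.ext this
  -- column operations: W z equals the determinant with column ι replaced by b z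
  have hWz : ∀ z, W z = ((M z).updateCol ι (b z)).det := by
    intro z
    rw [det_updateColumn_of_sub_mem_span (M z) ι (b z) (hcorr z), hWdef]
  -- continuity of hfun · s at 0
  have hcont_h : ∀ s, ContinuousAt (fun z => hfun z s) 0 := by
    intro s
    have hst : Tendsto (fun z => hfun z s) (𝓝[≠] (0 : ℂ)) (𝓝 (D s)) := by
      have hsl := hasDerivAt_iff_tendsto_slope.mp (hbD s)
      refine hsl.congr' ?_
      filter_upwards [self_mem_nhdsWithin] with z hz
      have hz' : z ≠ 0 := hz
      rw [slope_def_field, hb0 s, sub_zero, sub_zero]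
      show b z s / z = hfun z s
      rw [hhfun]
      simp only [if_neg hz', Pi.smul_apply, smul_eq_mul]
      rw [div_eq_inv_mul]
    have h0 : hfun 0 s = D s := by rw [hhfun]; simp
    rw [ContinuousAt, h0, ← nhdsNE_sup_pure, tendsto_sup]
    exact ⟨hst, by rw [show (𝓝 (D s)) = 𝓝 (hfun 0 s) by rw [h0]]; exact tendsto_pure_nhds _ 0⟩
  -- continuity of F at 0
  have hcontF : ContinuousAt F 0 := by
    have hmat : ContinuousAt (fun z => (M z).updateCol ι (hfun z)) 0 := by
      refine continuousAt_pi.mpr ?_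
      intro s
      rw [continuousAt_pi]
      intro j
      by_cases hj : j = ι
      · subst hj
        simp only [Matrix.updateCol_apply, if_pos rfl]
        exact hcont_h s
      · simp only [Matrix.updateCol_apply, if_neg hj]
        exact (hAnal (j : ℕ) s).continuousAt
    exact (continuous_id.matrix_det.continuousAt).comp hmat
  -- the slope of W tends to F 0
  have hslope : Tendsto (slope W 0) (𝓝[≠] (0 : ℂ)) (𝓝 (F 0)) := by
    have hFt : Tendsto F (𝓝[≠] (0 : ℂ)) (𝓝 (F 0)) :=
      hcontF.continuousWithinAt
    refine hFt.congr' ?_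
    filter_upwards [self_mem_nhdsWithin] with z hz
    have hz' : z ≠ 0 := hz
    rw [slope_def_field, hW0, sub_zero, sub_zero, hWz z, hF]
    simp only [hhfun, if_neg hz']
    rw [Matrix.det_updateCol_smul]
    field_simp
  have hder : HasDerivAt W (F 0) 0 := hasDerivAt_iff_tendsto_slope.mpr hslope
  -- but F 0 = 0
  have hF0 : F 0 = 0 := by
    rw [hF]
    apply det_eq_zero_of_col_mem_span
    have hcol : (fun s => ((M 0).updateCol ι (hfun 0)) s ι) = D := by
      funext s
      rw [Matrix.updateCol_apply, if_pos rfl, hhfun]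
      simp
    have hfeq : (fun j : {j : Fin n // j ≠ ι} =>
        fun s => ((M 0).updateCol ι (hfun 0)) s (j : Fin n))
        = (fun j : {j : Fin n // j ≠ ι} =>
          fun s => iteratedDeriv (((j : Fin n)) : ℕ) (a s) 0) := by
      funext j s
      rw [Matrix.updateCol_apply, if_neg j.2]
      rfl
    have hcols : (Set.range fun j : {j : Fin n // j ≠ ι} =>
        fun s => ((M 0).updateCol ι (hfun 0)) s (j : Fin n))
        = (Set.range fun j : {j : Fin n // j ≠ ι} =>
          fun s => iteratedDeriv (((j : Fin n)) : ℕ) (a s) 0) := by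
      rw [hfeq]
    rw [hcol, hcols]
    exact hDP
  exact hW1 (by rw [hder.deriv, hF0])
end

section
/- Let $d, n \geq 1$ and let $P: \mathbb{C}^d \to \mathbb{C}^d$ be given componentwise by $P(\boldsymbol{v})_m = v_m^n + \sum_{i=1}^{n-1} v_m^{n-i-1} f_i(\boldsymbol{v})_m$, where each $f_i: \mathbb{C}^d \to \mathbb{C}^d$ is a polynomial map each of whose components is a polynomial of total degree at most $i$ in $v_1, \dots, v_d$. Then $P$ has at least one zero in $\mathbb{C}^d$, and the zero set $P^{-1}(0)$ is finite. -/
open MvPolynomial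

namespace Stmt3

lemma degree_add (a b : Fin d →₀ ℕ) : (a + b).degree = a.degree + b.degree := by
  simp only [Finsupp.degree_eq_weight_one, map_add]

lemma degree_single (a : Fin d) (k : ℕ) : (Finsupp.single a k).degree = k := by
  rcases Nat.eq_zero_or_pos k with h | h
  · simp [h, Finsupp.degree]
  · rw [Finsupp.degree_apply, Finsupp.support_single_ne_zero _ h.ne',
      Finset.sum_singleton, Finsupp.single_eq_same]

lemma degree_sub_single {α : Fin d →₀ ℕ} {m : Fin d} {k : ℕ} (h : k ≤ α m) :
    (α - Finsupp.single m k).degree + k = α.degree := by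
  have h1 : α - Finsupp.single m k + Finsupp.single m k = α :=
    tsub_add_cancel_of_le (Finsupp.single_le_iff.mpr h)
  calc (α - Finsupp.single m k).degree + k
      = (α - Finsupp.single m k).degree + (Finsupp.single m k).degree := by
        rw [degree_single]
    _ = (α - Finsupp.single m k + Finsupp.single m k).degree := (degree_add _ _).symm
    _ = α.degree := by rw [h1]

lemma totalDegree_le_iff_degree {p : MvPolynomial (Fin d) ℂ} {N : ℕ} :
    p.totalDegree ≤ N ↔ ∀ α ∈ p.support, Finsupp.degree α ≤ N :=
  Finset.sup_le_iff

lemma degree_le_totalDegree {p : MvPolynomial (Fin d) ℂ} {α : Fin d →₀ ℕ}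
    (h : α ∈ p.support) : α.degree ≤ p.totalDegree :=
  Finset.le_sup (f := fun s => s.sum fun _ e => e) h

/-- shifting a homogeneous component along multiplication by `X m ^ n`. -/
lemma hc_mul_Xpow (D n : ℕ) (m : Fin d) (p : MvPolynomial (Fin d) ℂ) :
    homogeneousComponent (D + n) (p * X m ^ n)
      = homogeneousComponent D p * X m ^ n := by
  ext α
  rw [coeff_homogeneousComponent, X_pow_eq_monomial, coeff_mul_monomial',
    coeff_mul_monomial']
  by_cases hle : Finsupp.single m n ≤ α
  · have h1 : (α - Finsupp.single m n).degree + n = α.degree :=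
      degree_sub_single (Finsupp.single_le_iff.mp hle)
    rw [if_pos hle, if_pos hle, coeff_homogeneousComponent]
    by_cases h2 : α.degree = D + n
    · rw [if_pos h2, if_pos (by omega)]
    · rw [if_neg h2, if_neg (by omega), zero_mul]
  · rw [if_neg hle, if_neg hle, ite_self]

/-- Division lemma: if `p * X a ^ n` is a combination of multiples of `X m ^ n`, `m ∈ t`,
`a ∉ t`, then so is `p` itself. -/
lemma div_lemma {n D : ℕ} (t : Finset (Fin d)) (a : Fin d) (ha : a ∉ t)
    (p : MvPolynomial (Fin d) ℂ) (hp : p.IsHomogeneous D)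
    (e : Fin d → MvPolynomial (Fin d) ℂ)
    (heq : p * X a ^ n = ∑ m ∈ t, e m * X m ^ n) :
    ∃ b : Fin d → MvPolynomial (Fin d) ℂ,
      (∀ k, (b k).IsHomogeneous (D - n)) ∧ (∀ k, b k ≠ 0 → k ∈ t ∧ n ≤ D) ∧
      p = ∑ k ∈ t, b k * X k ^ n := by
  classical
  have hdeg : ∀ α ∈ p.support, α.degree = D := by
    intro α hα
    have := hp (mem_support_iff.mp hα)
    rw [Finsupp.degree_eq_weight_one]; exact this
  have hdiv : ∀ α ∈ p.support, ∃ m, m ∈ t ∧ n ≤ α m := by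
    intro α hα
    have h1 : coeff (α + Finsupp.single a n) (p * X a ^ n) = coeff α p := by
      rw [X_pow_eq_monomial, coeff_mul_monomial, mul_one]
    rw [heq] at h1
    have h2 : ∃ m ∈ t, coeff (α + Finsupp.single a n) (e m * X m ^ n) ≠ 0 := by
      by_contra hcon
      push_neg at hcon
      rw [coeff_sum, Finset.sum_eq_zero hcon] at h1
      exact mem_support_iff.mp hα h1.symm
    obtain ⟨m, hm, hne⟩ := h2
    refine ⟨m, hm, ?_⟩
    rw [X_pow_eq_monomial, coeff_mul_monomial'] at hne
    by_cases hle : Finsupp.single m n ≤ α + Finsupp.single a n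
    · have := Finsupp.single_le_iff.mp hle
      have hma : m ≠ a := fun h => ha (h ▸ hm)
      simpa [Finsupp.single_apply, hma.symm] using this
    · rw [if_neg hle] at hne
      exact absurd rfl hne
  -- choice function
  let ch : (Fin d →₀ ℕ) → Fin d := fun α =>
    if h : ∃ m, m ∈ t ∧ n ≤ α m then h.choose else a
  have hch : ∀ α ∈ p.support, ch α ∈ t ∧ n ≤ α (ch α) := by
    intro α hα
    have h := hdiv α hα
    simp only [ch, dif_pos h]
    exact h.choose_spec
  set b : Fin d → MvPolynomial (Fin d) ℂ := fun k =>
    ∑ α ∈ p.support.filter (fun α => ch α = k),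
      monomial (α - Finsupp.single k n) (coeff α p) with hb
  have hmem : ∀ k, ∀ α ∈ p.support.filter (fun α => ch α = k),
      k ∈ t ∧ n ≤ α k := by
    intro k α hα
    rw [Finset.mem_filter] at hα
    obtain ⟨h1, h2⟩ := hα
    exact h2 ▸ hch α h1
  refine ⟨b, ?_, ?_, ?_⟩
  · intro k
    apply IsHomogeneous.sum
    intro α hα
    obtain ⟨hkt, hkn⟩ := hmem k α hα
    apply isHomogeneous_monomial
    have h3 := degree_sub_single hkn
    have h4 := hdeg α (Finset.mem_filter.mp hα).1
    omega
  · intro k hk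
    rw [hb] at hk
    have : (p.support.filter (fun α => ch α = k)).Nonempty := by
      by_contra hcon
      rw [Finset.not_nonempty_iff_eq_empty] at hcon
      simp [hcon] at hk
    obtain ⟨α, hα⟩ := this
    obtain ⟨hkt, hkn⟩ := hmem k α hα
    have h4 := hdeg α (Finset.mem_filter.mp hα).1
    have h5 := Finsupp.le_degree k α
    exact ⟨hkt, by omega⟩
  · have : ∀ k ∈ t, b k * X k ^ n =
        ∑ α ∈ p.support.filter (fun α => ch α = k), monomial α (coeff α p) := by
      intro k hkt
      rw [hb, Finset.sum_mul]
      apply Finset.sum_congr rfl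
      intro α hα
      obtain ⟨_, hkn⟩ := hmem k α hα
      rw [X_pow_eq_monomial, monomial_mul, mul_one,
        tsub_add_cancel_of_le (Finsupp.single_le_iff.mpr hkn)]
    rw [Finset.sum_congr rfl this,
      Finset.sum_fiberwise_of_maps_to (fun α hα => (hch α hα).1),
      support_sum_monomial_coeff]

/-- Koszul syzygies: a homogeneous relation among the `X m ^ n` is generated by the
antisymmetric trivial relations. -/
lemma syz {n D : ℕ} (t : Finset (Fin d)) :
    ∀ c : Fin d → MvPolynomial (Fin d) ℂ, (∀ m, (c m).IsHomogeneous D) →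
    ∑ m ∈ t, c m * X m ^ n = 0 →
    ∃ h : Fin d → Fin d → MvPolynomial (Fin d) ℂ,
      (∀ m k, h m k = - h k m) ∧
      (∀ m k, h m k ≠ 0 → n ≤ D ∧ (h m k).IsHomogeneous (D - n)) ∧
      (∀ m ∈ t, c m = ∑ k ∈ t, h m k * X k ^ n) := by
  classical
  induction t using Finset.induction with
  | empty => exact fun c _ _ => ⟨0, by simp, by simp, by simp⟩
  | @insert a s ha ih =>
    intro c hc hsum
    rw [Finset.sum_insert ha] at hsum
    have heq : c a * X a ^ n = ∑ m ∈ s, (-(c m)) * X m ^ n := by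
      have : ∑ m ∈ s, (-(c m)) * X m ^ n = -∑ m ∈ s, c m * X m ^ n := by
        rw [← Finset.sum_neg_distrib]
        exact Finset.sum_congr rfl fun m _ => by ring
      rw [this]
      linear_combination hsum
    obtain ⟨b, hbhom, hbne, hbeq⟩ := div_lemma s a ha (c a) (hc a) _ heq
    -- modified family
    set c' : Fin d → MvPolynomial (Fin d) ℂ :=
      fun m => if m = a then 0 else c m + b m * X a ^ n with hc'def
    have hc' : ∀ m, (c' m).IsHomogeneous D := by
      intro m
      rw [hc'def]
      by_cases hma : m = a
      · simp only [if_pos hma]; exact isHomogeneous_zero _ _ _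
      · simp only [if_neg hma]
        apply (hc m).add
        by_cases hbm : b m = 0
        · rw [hbm, zero_mul]; exact isHomogeneous_zero _ _ _
        · obtain ⟨_, hnD⟩ := hbne m hbm
          have := (hbhom m).mul (isHomogeneous_X_pow a n)
          rwa [Nat.sub_add_cancel hnD] at this
    have hsum' : ∑ m ∈ s, c' m * X m ^ n = 0 := by
      have h1 : ∀ m ∈ s, c' m * X m ^ n = c m * X m ^ n + (b m * X m ^ n) * X a ^ n := by
        intro m hm
        have : m ≠ a := fun h => ha (h ▸ hm)
        rw [hc'def]; simp only [if_neg this]; ring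
      rw [Finset.sum_congr rfl h1, Finset.sum_add_distrib, ← Finset.sum_mul, ← hbeq]
      linear_combination hsum
    obtain ⟨h', hanti', hhom', heq'⟩ := ih c' hc' hsum'
    refine ⟨fun m k => if m = a then (if k = a then 0 else b k)
      else (if k = a then -(b m) else h' m k), ?_, ?_, ?_⟩
    · intro m k
      by_cases hma : m = a <;> by_cases hka : k = a <;>
        simp [hma, hka, hanti' m k]
    · intro m k
      dsimp only
      by_cases hma : m = a
      · rw [if_pos hma]
        by_cases hka : k = a
        · rw [if_pos hka]; intro hne; exact absurd rfl hne
        · rw [if_neg hka]; intro hne; exact ⟨(hbne k hne).2, hbhom k⟩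
      · rw [if_neg hma]
        by_cases hka : k = a
        · rw [if_pos hka]; intro hne
          have hb : b m ≠ 0 := fun h0 => hne (by rw [h0, neg_zero])
          exact ⟨(hbne m hb).2, (hbhom m).neg⟩
        · rw [if_neg hka]; exact hhom' m k
    · intro m hm
      rw [Finset.mem_insert] at hm
      rw [Finset.sum_insert ha]
      dsimp only
      rcases hm with hm | hm
      · subst hm
        simp only [eq_self_iff_true, if_true]
        have h2 : ∀ k ∈ s, (if k = m then (0 : MvPolynomial (Fin d) ℂ) else b k) * X k ^ n
            = b k * X k ^ n := by
          intro k hk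
          have hka : k ≠ m := fun h => ha (h ▸ hk)
          rw [if_neg hka]
        rw [Finset.sum_congr rfl h2, zero_mul, zero_add, hbeq]
      · have hma : m ≠ a := fun h => ha (h ▸ hm)
        simp only [if_neg hma, eq_self_iff_true, if_true]
        have h2 : ∀ k ∈ s, (if k = a then -(b m) else h' m k) * X k ^ n
            = h' m k * X k ^ n := by
          intro k hk
          have hka : k ≠ a := fun h => ha (h ▸ hk)
          rw [if_neg hka]
        rw [Finset.sum_congr rfl h2, ← heq' m hm, hc'def]
        simp only [if_neg hma]
        ring

lemma totalDegree_sub_hc {p : MvPolynomial (Fin d) ℂ} {D : ℕ} (hp : p.totalDegree ≤ D) :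
    (p - homogeneousComponent D p).totalDegree ≤ D - 1 := by
  rw [totalDegree_le_iff_degree]
  intro α hα
  rw [mem_support_iff, coeff_sub, coeff_homogeneousComponent] at hα
  by_cases h : α.degree = D
  · rw [if_pos h, sub_self] at hα; exact absurd rfl hα
  · rw [if_neg h, sub_zero] at hα
    have := degree_le_totalDegree (mem_support_iff.mpr hα)
    omega

lemma sub_hc_eq_zero {p : MvPolynomial (Fin d) ℂ} (hp : p.totalDegree ≤ 0) :
    p - homogeneousComponent 0 p = 0 := by
  ext α
  rw [coeff_sub, coeff_homogeneousComponent, coeff_zero]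
  by_cases h : α.degree = 0
  · rw [if_pos h, sub_self]
  · rw [if_neg h, sub_zero]
    by_contra hc
    have := degree_le_totalDegree (mem_support_iff.mpr hc)
    omega

/-- The descent: no combination of the `P m` with controlled degrees equals `1`. -/
lemma key {n : ℕ} (hn : 1 ≤ n) (q : Fin d → MvPolynomial (Fin d) ℂ)
    (hq : ∀ m, (q m).totalDegree ≤ n - 1) (D : ℕ) :
    ∀ g : Fin d → MvPolynomial (Fin d) ℂ, (∀ m, (g m).totalDegree ≤ D) →
      ∑ m, g m * (X m ^ n + q m) ≠ 1 := by
  induction D using Nat.strong_induction_on with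
  | _ D ih =>
  intro g hg hsum
  set c : Fin d → MvPolynomial (Fin d) ℂ :=
    fun m => homogeneousComponent D (g m) with hcdef
  have hchom : ∀ m, (c m).IsHomogeneous D :=
    fun m => homogeneousComponent_isHomogeneous D (g m)
  have hczero : ∑ m, c m * X m ^ n = 0 := by
    have h0 := congrArg (homogeneousComponent (D + n)) hsum
    rw [map_sum] at h0
    have h1 : ∀ m ∈ Finset.univ, homogeneousComponent (D + n) (g m * (X m ^ n + q m))
        = c m * X m ^ n := by
      intro m _
      rw [mul_add, map_add, hc_mul_Xpow]
      have h2 : (g m * q m).totalDegree < D + n := by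
        have h3 := totalDegree_mul (g m) (q m)
        have h4 := hq m; have h5 := hg m; omega
      rw [homogeneousComponent_eq_zero _ _ h2, add_zero]
    rw [Finset.sum_congr rfl h1] at h0
    rw [homogeneousComponent_eq_zero (D + n) 1 (by rw [totalDegree_one]; omega)] at h0
    exact h0
  obtain ⟨h, hanti, hhom, hrep⟩ := syz (n := n) (D := D) Finset.univ c hchom hczero
  set g' : Fin d → MvPolynomial (Fin d) ℂ :=
    fun k => (g k - c k) + ∑ m, h m k * q m with hg'def
  have hS : (∑ m, ∑ k, h m k * (q k * q m)) = 0 := by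
    have h1 : (∑ m, ∑ k, h m k * (q k * q m))
        = -∑ m, ∑ k, h k m * (q k * q m) := by
      rw [← Finset.sum_neg_distrib]
      refine Finset.sum_congr rfl fun m _ => ?_
      rw [← Finset.sum_neg_distrib]
      refine Finset.sum_congr rfl fun k _ => ?_
      rw [hanti m k]; ring
    have h2 : (∑ m, ∑ k, h k m * (q k * q m))
        = ∑ m, ∑ k, h m k * (q k * q m) := by
      calc ∑ m, ∑ k, h k m * (q k * q m)
          = ∑ k, ∑ m, h k m * (q k * q m) := Finset.sum_comm
        _ = ∑ m, ∑ k, h m k * (q k * q m) :=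
            Finset.sum_congr rfl fun m _ => Finset.sum_congr rfl fun k _ => by ring
    rw [h2] at h1
    have h3 : (2:ℂ) • (∑ m, ∑ k, h m k * (q k * q m)) = 0 := by
      rw [two_smul]
      exact add_eq_zero_iff_eq_neg.mpr h1
    exact (smul_eq_zero.mp h3).resolve_left (by norm_num)
  have hsum' : ∑ k, g' k * (X k ^ n + q k) = 1 := by
    have expand : ∀ k ∈ Finset.univ, g' k * (X k ^ n + q k)
        = g k * (X k ^ n + q k) - c k * X k ^ n - c k * q k
          + (∑ m, h m k * q m) * X k ^ n + (∑ m, h m k * q m) * q k := by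
      intro k _; rw [hg'def]; ring
    have h34 : ∑ k, c k * q k = ∑ k, (∑ m, h m k * q m) * X k ^ n := by
      have e1 : ∀ k ∈ Finset.univ, c k * q k = ∑ j, h k j * X j ^ n * q k := by
        intro k _; rw [hrep k (Finset.mem_univ k), Finset.sum_mul]
      calc ∑ k, c k * q k
          = ∑ k, ∑ j, h k j * X j ^ n * q k := Finset.sum_congr rfl e1
        _ = ∑ j, ∑ k, h k j * X j ^ n * q k := Finset.sum_comm
        _ = ∑ k, (∑ m, h m k * q m) * X k ^ n := by
            refine Finset.sum_congr rfl fun j _ => ?_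
            rw [Finset.sum_mul]
            exact Finset.sum_congr rfl fun k _ => by ring
    have h5 : ∑ k, (∑ m, h m k * q m) * q k = 0 := by
      calc ∑ k, (∑ m, h m k * q m) * q k
          = ∑ k, ∑ m, h m k * q m * q k :=
            Finset.sum_congr rfl fun k _ => Finset.sum_mul _ _ _
        _ = ∑ m, ∑ k, h m k * q m * q k := Finset.sum_comm
        _ = ∑ m, ∑ k, h m k * (q k * q m) :=
            Finset.sum_congr rfl fun m _ => Finset.sum_congr rfl fun k _ => by ring
        _ = 0 := hS
    rw [Finset.sum_congr rfl expand, Finset.sum_add_distrib, Finset.sum_add_distrib,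
      Finset.sum_sub_distrib, Finset.sum_sub_distrib, hsum, hczero, h34, h5]
    ring
  rcases Nat.eq_zero_or_pos D with hD | hD
  · subst hD
    have hg0 : ∀ k, g' k = 0 := by
      intro k
      simp only [hg'def]
      have h1 : g k - c k = 0 := by
        simp only [hcdef]
        exact sub_hc_eq_zero (hg k)
      have h2 : ∀ m ∈ Finset.univ, h m k * q m = 0 := by
        intro m _
        rcases eq_or_ne (h m k) 0 with h0 | h0
        · rw [h0, zero_mul]
        · exact absurd (hhom m k h0).1 (by omega)
      rw [h1, Finset.sum_eq_zero h2, add_zero]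
    rw [Finset.sum_congr rfl (fun k _ => by rw [hg0 k, zero_mul]),
      Finset.sum_const_zero] at hsum'
    exact one_ne_zero hsum'.symm
  · refine ih (D - 1) (by omega) g' ?_ hsum'
    intro k
    simp only [hg'def]
    refine le_trans (totalDegree_add _ _) (sup_le ?_ ?_)
    · simp only [hcdef]
      exact le_trans (totalDegree_sub_hc (hg k)) (by omega)
    · refine le_trans (totalDegree_finset_sum _ _) (Finset.sup_le fun m _ => ?_)
      rcases eq_or_ne (h m k) 0 with h0 | h0
      · rw [h0, zero_mul, totalDegree_zero]; exact Nat.zero_le _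
      · obtain ⟨hnD, hhomm⟩ := hhom m k h0
        refine le_trans (totalDegree_mul _ _) ?_
        have h6 := hhomm.totalDegree_le
        have h7 := hq m
        omega

section Main

/-- The ideal generated by the `P m` is proper. -/
lemma one_notMem {d n : ℕ} (hn : 1 ≤ n) (q : Fin d → MvPolynomial (Fin d) ℂ)
    (hq : ∀ m, (q m).totalDegree ≤ n - 1) :
    (1 : MvPolynomial (Fin d) ℂ) ∉
      Ideal.span (Set.range fun m => X m ^ n + q m) := by
  intro hmem
  rw [Ideal.mem_span_range_iff_exists_fun] at hmem
  obtain ⟨g, hg⟩ := hmem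
  exact key hn q hq (Finset.univ.sup fun m => (g m).totalDegree) g
    (fun m => Finset.le_sup (f := fun m => (g m).totalDegree) (Finset.mem_univ m)) hg

/-- The quotient by the ideal is a finite-dimensional `ℂ`-vector space. -/
lemma finite_quotient {d n : ℕ} (hn : 1 ≤ n) (q : Fin d → MvPolynomial (Fin d) ℂ)
    (hq : ∀ m, (q m).totalDegree ≤ n - 1) :
    Module.Finite ℂ
      ((MvPolynomial (Fin d) ℂ) ⧸ Ideal.span (Set.range fun m => X m ^ n + q m)) := by
  classical
  set I : Ideal (MvPolynomial (Fin d) ℂ) :=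
    Ideal.span (Set.range fun m => X m ^ n + q m) with hIdef
  set φ := Ideal.Quotient.mkₐ ℂ I with hφdef
  set B : Set ((MvPolynomial (Fin d) ℂ) ⧸ I) :=
    (fun α : Fin d →₀ ℕ => φ (monomial α 1)) '' {α | α.degree ≤ d * (n-1)} with hBdef
  have hBfin : B.Finite :=
    Set.Finite.image _ (Finsupp.finite_of_degree_le (d * (n-1)))
  have main : ∀ N : ℕ, ∀ p : MvPolynomial (Fin d) ℂ, p.totalDegree ≤ N →
      φ p ∈ Submodule.span ℂ B := by
    intro N
    induction N using Nat.strong_induction_on with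
    | _ N ih =>
    intro p hp
    rw [p.as_sum, map_sum]
    apply Submodule.sum_mem
    intro α hα
    have hmono : (monomial α (coeff α p)) = (coeff α p) • (monomial α (1:ℂ)) := by
      rw [smul_monomial, smul_eq_mul, mul_one]
    rw [hmono, map_smul]
    apply Submodule.smul_mem
    by_cases hcase : ∀ m, α m ≤ n - 1
    · apply Submodule.subset_span
      refine ⟨α, ?_, rfl⟩
      have : α.degree ≤ d * (n - 1) := by
        rw [Finsupp.degree]
        calc ∑ i ∈ α.support, α i ≤ ∑ i ∈ (Finset.univ : Finset (Fin d)), (n-1) := by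
              apply le_trans (Finset.sum_le_sum_of_subset (Finset.subset_univ _))
              exact Finset.sum_le_sum fun i _ => hcase i
          _ = d * (n-1) := by rw [Finset.sum_const, Finset.card_univ, Fintype.card_fin,
              smul_eq_mul]
      exact this
    · push_neg at hcase
      obtain ⟨m, hm⟩ := hcase
      have hmn : n ≤ α m := by omega
      set β := α - Finsupp.single m n with hβdef
      have hβ : β + Finsupp.single m n = α :=
        tsub_add_cancel_of_le (Finsupp.single_le_iff.mpr hmn)
      have hXpow : monomial β (1:ℂ) * X m ^ n = monomial α 1 := by
        rw [X_pow_eq_monomial, monomial_mul, mul_one, hβ]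
      have hid : monomial α (1:ℂ)
          = monomial β 1 * (X m ^ n + q m) - monomial β 1 * q m := by
        rw [mul_add, ← hXpow]; ring
      have hPm : (X m ^ n + q m) ∈ I := by
        rw [hIdef]
        exact Ideal.subset_span ⟨m, rfl⟩
      have hzero : φ (monomial β 1 * (X m ^ n + q m)) = 0 := by
        rw [hφdef, Ideal.Quotient.mkₐ_eq_mk, Ideal.Quotient.eq_zero_iff_mem]
        exact I.mul_mem_left _ hPm
      rw [hid, map_sub, hzero, zero_sub]
      apply Submodule.neg_mem
      -- degree bookkeeping
      have hαN : α.degree ≤ N := le_trans (degree_le_totalDegree hα) hp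
      have hnα : n ≤ α.degree := le_trans hmn (Finsupp.le_degree m α)
      have hβdeg : β.degree + n = α.degree := degree_sub_single hmn
      have hqdeg : (monomial β (1:ℂ) * q m).totalDegree ≤ N - 1 := by
        refine le_trans (totalDegree_mul _ _) ?_
        have h1 : (monomial β (1:ℂ)).totalDegree = β.degree :=
          totalDegree_monomial β one_ne_zero
        have h2 := hq m
        omega
      exact ih (N - 1) (by omega) _ hqdeg
  rw [Module.finite_def, Submodule.fg_def]
  refine ⟨B, hBfin, ?_⟩
  rw [Submodule.eq_top_iff']
  intro x
  obtain ⟨p, rfl⟩ := Ideal.Quotient.mk_surjective x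
  have h9 := main p.totalDegree p le_rfl
  rwa [hφdef, Ideal.Quotient.mkₐ_eq_mk] at h9

/-- Existence of a common zero. -/
lemma exists_zero {d n : ℕ} (hn : 1 ≤ n) (q : Fin d → MvPolynomial (Fin d) ℂ)
    (hq : ∀ m, (q m).totalDegree ≤ n - 1) :
    ∃ v : Fin d → ℂ, ∀ m, eval v (X m ^ n + q m) = 0 := by
  classical
  set I : Ideal (MvPolynomial (Fin d) ℂ) :=
    Ideal.span (Set.range fun m => X m ^ n + q m) with hIdef
  have hne : I ≠ ⊤ := by
    intro h
    apply one_notMem hn q hq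
    rw [hIdef] at h
    rw [h]
    exact Submodule.mem_top
  haveI := Ideal.Quotient.nontrivial_iff.mpr hne
  haveI : Module.Finite ℂ (MvPolynomial (Fin d) ℂ ⧸ I) := finite_quotient hn q hq
  obtain ⟨M, hM⟩ := Ideal.exists_maximal (MvPolynomial (Fin d) ℂ ⧸ I)
  haveI := hM
  letI : Field ((MvPolynomial (Fin d) ℂ ⧸ I) ⧸ M) := Ideal.Quotient.field M
  haveI : Module.Finite ℂ ((MvPolynomial (Fin d) ℂ ⧸ I) ⧸ M) :=
    Module.Finite.of_surjective (Ideal.Quotient.mkₐ ℂ M).toLinearMap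
      Ideal.Quotient.mk_surjective
  haveI : Algebra.IsIntegral ℂ ((MvPolynomial (Fin d) ℂ ⧸ I) ⧸ M) :=
    Algebra.IsIntegral.of_finite ℂ _
  have hsurj : Function.Surjective (algebraMap ℂ ((MvPolynomial (Fin d) ℂ ⧸ I) ⧸ M)) :=
    IsAlgClosed.algebraMap_bijective_of_isIntegral.2
  have hinj : Function.Injective (algebraMap ℂ ((MvPolynomial (Fin d) ℂ ⧸ I) ⧸ M)) :=
    (algebraMap ℂ _).injective
  let e := AlgEquiv.ofBijective (Algebra.ofId ℂ ((MvPolynomial (Fin d) ℂ ⧸ I) ⧸ M))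
    ⟨hinj, hsurj⟩
  let Φ : MvPolynomial (Fin d) ℂ →ₐ[ℂ] ℂ :=
    (e.symm.toAlgHom.comp ((Ideal.Quotient.mkₐ ℂ M).comp (Ideal.Quotient.mkₐ ℂ I)))
  refine ⟨fun m => Φ (X m), fun m => ?_⟩
  have h0 : Φ (X m ^ n + q m) = 0 := by
    have h1 : Ideal.Quotient.mkₐ ℂ I (X m ^ n + q m) = 0 := by
      rw [Ideal.Quotient.mkₐ_eq_mk, Ideal.Quotient.eq_zero_iff_mem]
      exact Ideal.subset_span ⟨m, rfl⟩
    simp only [Φ, AlgHom.comp_apply, h1, map_zero]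
  have h2 : (Φ : MvPolynomial (Fin d) ℂ →+* ℂ) = eval (fun m => Φ (X m)) :=
    ringHom_ext (fun c => by simp [← MvPolynomial.algebraMap_eq]) (fun i => by simp)
  have h3 := DFunLike.congr_fun h2 (X m ^ n + q m)
  rw [← h3]
  exact h0

/-- Finiteness of the zero set. -/
lemma zeros_finite {d n : ℕ} (hn : 1 ≤ n) (q : Fin d → MvPolynomial (Fin d) ℂ)
    (hq : ∀ m, (q m).totalDegree ≤ n - 1) :
    Set.Finite {v : Fin d → ℂ | ∀ m, eval v (X m ^ n + q m) = 0} := by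
  classical
  set I : Ideal (MvPolynomial (Fin d) ℂ) :=
    Ideal.span (Set.range fun m => X m ^ n + q m) with hIdef
  haveI : Module.Finite ℂ (MvPolynomial (Fin d) ℂ ⧸ I) := finite_quotient hn q hq
  haveI : Algebra.IsIntegral ℂ (MvPolynomial (Fin d) ℂ ⧸ I) :=
    Algebra.IsIntegral.of_finite ℂ _
  have hpoly : ∀ m : Fin d, ∃ pm : Polynomial ℂ, pm ≠ 0 ∧
      Polynomial.aeval (X m : MvPolynomial (Fin d) ℂ) pm ∈ I := by
    intro m
    obtain ⟨pm, hmonic, heval⟩ := Algebra.IsIntegral.isIntegral (R := ℂ)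
      (Ideal.Quotient.mk I (X m))
    refine ⟨pm, hmonic.ne_zero, ?_⟩
    rw [← Ideal.Quotient.eq_zero_iff_mem]
    have h2 : Polynomial.aeval (Ideal.Quotient.mkₐ ℂ I (X m : MvPolynomial (Fin d) ℂ)) pm
        = 0 := by
      rw [Polynomial.aeval_def, Ideal.Quotient.mkₐ_eq_mk]
      exact heval
    calc Ideal.Quotient.mk I (Polynomial.aeval (X m : MvPolynomial (Fin d) ℂ) pm)
        = Ideal.Quotient.mkₐ ℂ I (Polynomial.aeval (X m : MvPolynomial (Fin d) ℂ) pm) := by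
          rw [Ideal.Quotient.mkₐ_eq_mk]
      _ = Polynomial.aeval (Ideal.Quotient.mkₐ ℂ I (X m : MvPolynomial (Fin d) ℂ)) pm :=
          (Polynomial.aeval_algHom_apply _ _ _).symm
      _ = 0 := h2
  choose p hp0 hpI using hpoly
  apply Set.Finite.subset (Set.Finite.pi (fun m => Polynomial.finite_setOf_isRoot (hp0 m)))
  intro v hv
  simp only [Set.mem_setOf_eq] at hv
  rw [Set.mem_pi]
  intro m _
  have hker : I ≤ RingHom.ker (eval v : MvPolynomial (Fin d) ℂ →+* ℂ) := by
    rw [hIdef, Ideal.span_le]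
    rintro _ ⟨k, rfl⟩
    simp only [SetLike.mem_coe, RingHom.mem_ker]
    exact hv k
  have h3 : eval v (Polynomial.aeval (X m : MvPolynomial (Fin d) ℂ) (p m)) = 0 :=
    RingHom.mem_ker.mp (hker (hpI m))
  have h5 := Polynomial.aeval_algHom_apply
    (MvPolynomial.aeval v : MvPolynomial (Fin d) ℂ →ₐ[ℂ] ℂ) (X m) (p m)
  rw [MvPolynomial.aeval_X] at h5
  have h6 : MvPolynomial.aeval v (Polynomial.aeval (X m : MvPolynomial (Fin d) ℂ) (p m))
      = eval v (Polynomial.aeval (X m : MvPolynomial (Fin d) ℂ) (p m)) :=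
    DFunLike.congr_fun (MvPolynomial.coe_aeval_eq_eval v)
      (Polynomial.aeval (X m : MvPolynomial (Fin d) ℂ) (p m))
  have h7 : Polynomial.aeval (v m) (p m) = 0 := by
    rw [h5, h6, h3]
  exact h7

end Main

end Stmt3

open scoped BigOperators

/-- **Existence and finiteness of zeros of the dominant polynomial system.**
Let `P : ℂᵈ → ℂᵈ` be given componentwise by
`P(v)_m = v_m ^ n + ∑_{i=1}^{n-1} v_m ^ (n-i-1) * f_i(v)_m`,
where each component of `f_i` is a polynomial of total degree at most `i` in
`v_1, …, v_d`.  Then `P` has at least one zero in `ℂᵈ`, and its zero set is finite. -/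
theorem stmt_3 (d n : ℕ) (hd : 1 ≤ d) (hn : 1 ≤ n)
    (f : ℕ → Fin d → MvPolynomial (Fin d) ℂ)
    (hf : ∀ i, 1 ≤ i → i ≤ n - 1 → ∀ m, (f i m).totalDegree ≤ i) :
    (∃ v : Fin d → ℂ, ∀ m : Fin d,
        v m ^ n + ∑ i ∈ Finset.Icc 1 (n - 1),
          v m ^ (n - i - 1) * MvPolynomial.eval v (f i m) = 0) ∧
    Set.Finite {v : Fin d → ℂ | ∀ m : Fin d,
        v m ^ n + ∑ i ∈ Finset.Icc 1 (n - 1),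
          v m ^ (n - i - 1) * MvPolynomial.eval v (f i m) = 0} := by
  classical
  set q : Fin d → MvPolynomial (Fin d) ℂ :=
    fun m => ∑ i ∈ Finset.Icc 1 (n - 1), MvPolynomial.X m ^ (n - i - 1) * f i m with hqdef
  have hq : ∀ m, (q m).totalDegree ≤ n - 1 := by
    intro m
    refine le_trans (MvPolynomial.totalDegree_finset_sum _ _) (Finset.sup_le fun i hi => ?_)
    rw [Finset.mem_Icc] at hi
    refine le_trans (MvPolynomial.totalDegree_mul _ _) ?_
    rw [MvPolynomial.totalDegree_X_pow]
    have := hf i hi.1 hi.2 m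
    omega
  have hev : ∀ (v : Fin d → ℂ) (m : Fin d),
      MvPolynomial.eval v (MvPolynomial.X m ^ n + q m)
      = v m ^ n + ∑ i ∈ Finset.Icc 1 (n - 1),
          v m ^ (n - i - 1) * MvPolynomial.eval v (f i m) := by
    intro v m
    simp only [hqdef, map_add, map_sum, map_mul, map_pow, MvPolynomial.eval_X]
  constructor
  · obtain ⟨v, hv⟩ := Stmt3.exists_zero hn q hq
    exact ⟨v, fun m => by rw [← hev v m]; exact hv m⟩
  · refine Set.Finite.subset (Stmt3.zeros_finite hn q hq) fun v hv => ?_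
    intro m
    rw [hev v m]
    exact hv m
end

section
/- Suppose a local system of rank $n$ on a disc $U$ with coordinate $z$ is given by the kernel of a holomorphic connection $\nabla = d + A(z)dz$ on the trivial bundle $\mathcal{O}_U^n$, and let $s$ be a nowhere-vanishing holomorphic section of a line subbundle $L \subset \mathcal{O}_U^n$, written as $i(s) = \sum_j a_j(z)\mathbf{e}_j$ in a flat frame $(\mathbf{e}_j)$. If the Wronskian $\operatorname{Wr}(a_1,\dots,a_n)$ vanishes identically, then the dual connection admits a nonzero flat local section annihilating $i(s)$; in particular $(E^\vee, \nabla^\vee)$ has a proper nonzero flat subspace of constant sections pairing to zero with $L$, so $(E,\nabla)$ is reducible. -/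
open scoped BigOperators
section WronskianAux
open Matrix

/-- determinant of a matrix with analytic entries is analytic -/
lemma analytic_det_aux {ι : Type*} [Fintype ι] [DecidableEq ι] {U : Set ℂ}
    {N : ℂ → Matrix ι ι ℂ} (h : ∀ i j, AnalyticOnNhd ℂ (fun z => N z i j) U) :
    AnalyticOnNhd ℂ (fun z => (N z).det) U := by
  have hdet : (fun z => (N z).det) = fun z =>
      ∑ σ : Equiv.Perm ι, ((Equiv.Perm.sign σ : ℤ) : ℂ) * ∏ i, N z (σ i) i := by
    funext z; exact Matrix.det_apply' _
  rw [hdet]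
  exact Finset.analyticOnNhd_fun_sum _ fun σ _ =>
    analyticOnNhd_const.mul (Finset.analyticOnNhd_fun_prod _ fun i _ => h (σ i) i)

lemma analytic_iteratedDeriv_aux {U : Set ℂ} {f : ℂ → ℂ}
    (hf : AnalyticOnNhd ℂ f U) (k : ℕ) : AnalyticOnNhd ℂ (iteratedDeriv k f) U := by
  induction k with
  | zero => simpa [iteratedDeriv_zero] using hf
  | succ k ih => rw [iteratedDeriv_succ]; exact ih.deriv

lemma hasDerivAt_iteratedDeriv_aux {U : Set ℂ} {f : ℂ → ℂ} (hf : AnalyticOnNhd ℂ f U) {z : ℂ}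
    (hz : z ∈ U) (k : ℕ) :
    HasDerivAt (iteratedDeriv k f) (iteratedDeriv (k + 1) f z) z := by
  have h1 := ((analytic_iteratedDeriv_aux hf k) z hz).differentiableAt.hasDerivAt
  rw [iteratedDeriv_succ]
  exact h1

noncomputable def Dfun (m : ℕ) (a : Fin (m + 1) → ℂ → ℂ) : ℂ → ℂ :=
  fun z => (Matrix.of fun i j : Fin m => iteratedDeriv (j : ℕ) (a i.castSucc) z).det

noncomputable def Mmat (m : ℕ) (a : Fin (m + 1) → ℂ → ℂ) (z : ℂ) : Matrix (Fin m) (Fin m) ℂ :=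
  Matrix.of fun j i => iteratedDeriv (j : ℕ) (a i.castSucc) z

noncomputable def vvec (m : ℕ) (a : Fin (m + 1) → ℂ → ℂ) (z : ℂ) : Fin m → ℂ :=
  fun j => iteratedDeriv (j : ℕ) (a (Fin.last m)) z

noncomputable def cfun (m : ℕ) (a : Fin (m + 1) → ℂ → ℂ) (z : ℂ) : Fin m → ℂ :=
  (Dfun m a z)⁻¹ • (Mmat m a z).cramer (vvec m a z)

lemma Mmat_det (m : ℕ) (a : Fin (m + 1) → ℂ → ℂ) (z : ℂ) :
    (Mmat m a z).det = Dfun m a z := by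
  rw [show Mmat m a z
      = (Matrix.of fun i j : Fin m => iteratedDeriv (j : ℕ) (a i.castSucc) z)ᵀ from rfl,
    Matrix.det_transpose]
  rfl

/-- Case B of the induction: some `m×m` sub-Wronskian does not vanish at `z0`. -/
lemma caseB (m : ℕ) (U : Set ℂ) (hUo : IsOpen U) (hUc : IsPreconnected U)
    (a : Fin (m + 1) → ℂ → ℂ) (ha : ∀ i, AnalyticOnNhd ℂ (a i) U)
    (hW : ∀ z ∈ U, (Matrix.of fun i j : Fin (m + 1) => iteratedDeriv (j : ℕ) (a i) z).det = 0)
    (z0 : ℂ) (hz0U : z0 ∈ U) (hz0 : Dfun m a z0 ≠ 0) :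
    ∃ c : Fin (m + 1) → ℂ, c ≠ 0 ∧ ∀ z ∈ U, ∑ j, c j * a j z = 0 := by
  have hder : ∀ (i : Fin (m + 1)) (k : ℕ), AnalyticOnNhd ℂ (iteratedDeriv k (a i)) U :=
    fun i k => analytic_iteratedDeriv_aux (ha i) k
  have hDa : AnalyticOnNhd ℂ (Dfun m a) U :=
    analytic_det_aux fun i j => hder i.castSucc j
  have hVo : IsOpen {z | z ∈ U ∧ Dfun m a z ≠ 0} := by
    have h2 : {z | z ∈ U ∧ Dfun m a z ≠ 0} = U ∩ (Dfun m a) ⁻¹' ({0}ᶜ) := by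
      ext z; simp [Set.mem_inter_iff]
    rw [h2]
    exact hDa.continuousOn.isOpen_inter_preimage hUo isOpen_compl_singleton
  obtain ⟨r, hr0, hrB⟩ := Metric.isOpen_iff.mp hVo z0 ⟨hz0U, hz0⟩
  have hBU : Metric.ball z0 r ⊆ U := fun z hz => (hrB hz).1
  have hBD : ∀ z ∈ Metric.ball z0 r, Dfun m a z ≠ 0 := fun z hz => (hrB hz).2
  have hz0B : z0 ∈ Metric.ball z0 r := Metric.mem_ball_self hr0
  -- injectivity of M z
  have hinj : ∀ z ∈ Metric.ball z0 r, ∀ x : Fin m → ℂ, Mmat m a z *ᵥ x = 0 → x = 0 := by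
    intro z hz x hx
    by_contra h0
    have hd : (Mmat m a z).det = 0 := Matrix.exists_mulVec_eq_zero_iff.mp ⟨x, h0, hx⟩
    rw [Mmat_det] at hd
    exact hBD z hz hd
  -- key pointwise relations
  have hrel : ∀ z ∈ Metric.ball z0 r, ∀ k : ℕ, k ≤ m →
      ∑ i : Fin m, cfun m a z i * iteratedDeriv k (a i.castSucc) z
        = iteratedDeriv k (a (Fin.last m)) z := by
    intro z hz
    have hdet0 : (Matrix.of fun i j : Fin (m + 1) => iteratedDeriv (j : ℕ) (a i) z).det = 0 :=
      hW z (hBU hz)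
    obtain ⟨d, hd0, hdv⟩ := Matrix.exists_vecMul_eq_zero_iff.mpr hdet0
    have hdv' : ∀ j : Fin (m + 1),
        ∑ i : Fin (m + 1), d i * iteratedDeriv (j : ℕ) (a i) z = 0 := by
      intro j
      have h := congrFun hdv j
      simpa [Matrix.vecMul, dotProduct] using h
    have hdlast : d (Fin.last m) ≠ 0 := by
      intro hlast
      have hd' : (fun i : Fin m => d i.castSucc) ᵥ*
          (Matrix.of fun i j : Fin m => iteratedDeriv (j : ℕ) (a i.castSucc) z) = 0 := by
        funext j
        have h := hdv' j.castSucc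
        rw [Fin.sum_univ_castSucc, hlast] at h
        simpa [Matrix.vecMul, dotProduct, Fin.coe_castSucc] using h
      have hd'0 : (fun i : Fin m => d i.castSucc) ≠ 0 := by
        intro h
        apply hd0
        funext i
        refine Fin.lastCases ?_ ?_ i
        · exact hlast
        · intro i; exact congrFun h i
      have hdd : (Matrix.of fun i j : Fin m =>
          iteratedDeriv (j : ℕ) (a i.castSucc) z).det = 0 :=
        Matrix.exists_vecMul_eq_zero_iff.mp ⟨_, hd'0, hd'⟩
      exact hBD z hz hdd
    set e : Fin m → ℂ := fun i => -(d (Fin.last m))⁻¹ * d i.castSucc with he_def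
    have he : ∀ j : Fin (m + 1),
        ∑ i : Fin m, e i * iteratedDeriv (j : ℕ) (a i.castSucc) z
          = iteratedDeriv (j : ℕ) (a (Fin.last m)) z := by
      intro j
      have h1 := hdv' j
      rw [Fin.sum_univ_castSucc] at h1
      have h2 : ∑ i : Fin m, d i.castSucc * iteratedDeriv (j : ℕ) (a i.castSucc) z
          = -(d (Fin.last m) * iteratedDeriv (j : ℕ) (a (Fin.last m)) z) := by
        have := eq_neg_of_add_eq_zero_left h1
        simpa [Fin.coe_castSucc] using this
      calc ∑ i : Fin m, e i * iteratedDeriv (j : ℕ) (a i.castSucc) z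
          = -(d (Fin.last m))⁻¹ *
            ∑ i : Fin m, d i.castSucc * iteratedDeriv (j : ℕ) (a i.castSucc) z := by
            rw [Finset.mul_sum]; exact Finset.sum_congr rfl fun i _ => by rw [he_def]; ring
        _ = iteratedDeriv (j : ℕ) (a (Fin.last m)) z := by
            rw [h2]; field_simp
    have hMe : Mmat m a z *ᵥ e = vvec m a z := by
      funext j
      have h := he j.castSucc
      simp only [Fin.coe_castSucc] at h
      show ∑ i : Fin m, Mmat m a z j i * e i = vvec m a z j
      rw [show vvec m a z j = iteratedDeriv (j : ℕ) (a (Fin.last m)) z from rfl, ← h]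
      exact Finset.sum_congr rfl fun i _ => mul_comm _ _
    have hMc : Mmat m a z *ᵥ cfun m a z = vvec m a z := by
      show Mmat m a z *ᵥ ((Dfun m a z)⁻¹ • (Mmat m a z).cramer (vvec m a z)) = vvec m a z
      rw [Matrix.mulVec_smul, Matrix.mulVec_cramer, Mmat_det, smul_smul,
        inv_mul_cancel₀ (hBD z hz), one_smul]
    have hec : e = cfun m a z := by
      have hsub : Mmat m a z *ᵥ (e - cfun m a z) = 0 := by
        rw [Matrix.mulVec_sub, hMe, hMc, sub_self]
      exact sub_eq_zero.mp (hinj z hz _ hsub)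
    intro k hk
    have h := he ⟨k, by omega⟩
    rw [hec] at h
    exact h
  -- analyticity of the Cramer coefficients on the ball
  have hca : ∀ i : Fin m, AnalyticOnNhd ℂ (fun z => cfun m a z i) (Metric.ball z0 r) := by
    intro i
    have h1 : AnalyticOnNhd ℂ (fun z => ((Mmat m a z).updateCol i (vvec m a z)).det) U := by
      apply analytic_det_aux
      intro j k
      by_cases hki : k = i
      · simp only [Matrix.updateCol_apply, hki, if_true]
        exact hder (Fin.last m) j
      · simp only [Matrix.updateCol_apply, hki, if_false]
        exact hder k.castSucc j
    have h2 : AnalyticOnNhd ℂ (fun z => (Dfun m a z)⁻¹) (Metric.ball z0 r) :=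
      (hDa.mono hBU).inv hBD
    have h3 := h2.mul (h1.mono hBU)
    have heq : (fun z => cfun m a z i)
        = fun z => (Dfun m a z)⁻¹ * ((Mmat m a z).updateCol i (vvec m a z)).det := by
      funext z
      show ((Dfun m a z)⁻¹ • (Mmat m a z).cramer (vvec m a z)) i = _
      rw [Pi.smul_apply, smul_eq_mul, Matrix.cramer_apply]
    rw [heq]
    exact h3
  -- derivative of the coefficients vanishes on the ball
  have hderiv0 : ∀ z ∈ Metric.ball z0 r, ∀ i : Fin m,
      deriv (fun w => cfun m a w i) z = 0 := by
    intro z hz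
    suffices h : (fun i : Fin m => deriv (fun w => cfun m a w i) z) = 0 by
      intro i; exact congrFun h i
    apply hinj z hz
    funext j
    have hcd : ∀ i : Fin m,
        HasDerivAt (fun w => cfun m a w i) (deriv (fun w => cfun m a w i) z) z :=
      fun i => ((hca i z hz).differentiableAt).hasDerivAt
    have hsum : HasDerivAt
        (fun w => ∑ i : Fin m, cfun m a w i * iteratedDeriv (j : ℕ) (a i.castSucc) w)
        (∑ i : Fin m, (deriv (fun w => cfun m a w i) z * iteratedDeriv (j : ℕ) (a i.castSucc) z
          + cfun m a z i * iteratedDeriv ((j : ℕ) + 1) (a i.castSucc) z)) z := by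
      apply HasDerivAt.fun_sum
      intro i _
      exact (hcd i).mul (hasDerivAt_iteratedDeriv_aux (ha i.castSucc) (hBU hz) (j : ℕ))
    have hlast : HasDerivAt (iteratedDeriv (j : ℕ) (a (Fin.last m)))
        (iteratedDeriv ((j : ℕ) + 1) (a (Fin.last m)) z) z :=
      hasDerivAt_iteratedDeriv_aux (ha (Fin.last m)) (hBU hz) (j : ℕ)
    have hEq : (fun w => ∑ i : Fin m, cfun m a w i * iteratedDeriv (j : ℕ) (a i.castSucc) w)
        =ᶠ[nhds z] iteratedDeriv (j : ℕ) (a (Fin.last m)) := by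
      filter_upwards [Metric.isOpen_ball.mem_nhds hz] with w hw
      exact hrel w hw (j : ℕ) (Nat.le_of_lt j.isLt)
    have hsum' := hsum.congr_of_eventuallyEq hEq.symm
    have huniq := hsum'.unique hlast
    have hrel1 : ∑ i : Fin m, cfun m a z i * iteratedDeriv ((j : ℕ) + 1) (a i.castSucc) z
        = iteratedDeriv ((j : ℕ) + 1) (a (Fin.last m)) z :=
      hrel z hz ((j : ℕ) + 1) (by omega)
    have hzero : ∑ i : Fin m,
        deriv (fun w => cfun m a w i) z * iteratedDeriv (j : ℕ) (a i.castSucc) z = 0 := by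
      rw [Finset.sum_add_distrib, hrel1] at huniq
      linear_combination huniq
    show ∑ i : Fin m, Mmat m a z j i * deriv (fun w => cfun m a w i) z = 0
    rw [← hzero]
    exact Finset.sum_congr rfl fun i _ => mul_comm _ _
  -- the coefficients are constant on the ball
  have hconst : ∀ z ∈ Metric.ball z0 r, cfun m a z = cfun m a z0 := by
    intro z hz
    funext i
    apply (convex_ball z0 r).is_const_of_fderivWithin_eq_zero
      ((hca i).differentiableOn) ?_ hz hz0B
    intro x hx
    rw [fderivWithin_of_isOpen Metric.isOpen_ball hx]
    have h1 := ((hca i x hx).differentiableAt).hasDerivAt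
    rw [hderiv0 x hx i] at h1
    have h2 : HasFDerivAt (fun w => cfun m a w i)
        ((1 : ℂ →L[ℂ] ℂ).smulRight (0 : ℂ)) x := h1
    rw [h2.fderiv]
    ext
    simp
  -- identity theorem
  have hg : AnalyticOnNhd ℂ
      (fun z => a (Fin.last m) z - ∑ i : Fin m, cfun m a z0 i * a i.castSucc z) U := by
    apply (ha (Fin.last m)).sub
    exact Finset.analyticOnNhd_fun_sum _ fun i _ => analyticOnNhd_const.mul (ha i.castSucc)
  have hgz : Set.EqOn
      (fun z => a (Fin.last m) z - ∑ i : Fin m, cfun m a z0 i * a i.castSucc z) 0 U := by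
    apply hg.eqOn_zero_of_preconnected_of_eventuallyEq_zero hUc hz0U
    filter_upwards [Metric.isOpen_ball.mem_nhds hz0B] with w hw
    have h0 := hrel w hw 0 (Nat.zero_le m)
    rw [hconst w hw] at h0
    simp only [iteratedDeriv_zero] at h0
    show a (Fin.last m) w - ∑ i : Fin m, cfun m a z0 i * a i.castSucc w = 0
    rw [sub_eq_zero]
    exact h0.symm
  refine ⟨Fin.snoc (fun i => -(cfun m a z0 i)) 1, ?_, ?_⟩
  · intro h
    have h1 := congrFun h (Fin.last m)
    rw [Fin.snoc_last] at h1
    exact one_ne_zero h1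
  · intro z hz
    rw [Fin.sum_univ_castSucc]
    simp only [Fin.snoc_castSucc, Fin.snoc_last, one_mul]
    have h1 := hgz hz
    simp only [Pi.zero_apply] at h1
    have hsum : ∑ i : Fin m, -(cfun m a z0 i) * a i.castSucc z
        = -∑ i : Fin m, cfun m a z0 i * a i.castSucc z := by
      rw [← Finset.sum_neg_distrib]
      exact Finset.sum_congr rfl fun i _ => by ring
    rw [hsum]
    linear_combination h1

/-- the main induction -/
lemma key_wronskian : ∀ (n : ℕ) (U : Set ℂ), IsOpen U → IsPreconnected U → U.Nonempty →
    ∀ a : Fin n → ℂ → ℂ, (∀ i, AnalyticOnNhd ℂ (a i) U) →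
    (∀ z ∈ U, (Matrix.of fun i j : Fin n => iteratedDeriv (j : ℕ) (a i) z).det = 0) →
    ∃ c : Fin n → ℂ, c ≠ 0 ∧ ∀ z ∈ U, ∑ j, c j * a j z = 0 := by
  intro n
  induction n with
  | zero =>
    intro U _ _ hne a _ hW
    exfalso
    obtain ⟨z, hz⟩ := hne
    have := hW z hz
    simp [Matrix.det_fin_zero] at this
  | succ m IH =>
    intro U hUo hUc hne a ha hW
    by_cases hA : ∀ z ∈ U,
        (Matrix.of fun i j : Fin m => iteratedDeriv (j : ℕ) (a i.castSucc) z).det = 0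
    · obtain ⟨c', hc'0, hc's⟩ := IH U hUo hUc hne _ (fun i => ha i.castSucc) hA
      refine ⟨Fin.snoc c' 0, ?_, ?_⟩
      · intro h
        apply hc'0
        funext i
        have := congrFun h i.castSucc
        simpa [Fin.snoc_castSucc] using this
      · intro z hz
        rw [Fin.sum_univ_castSucc]
        simp only [Fin.snoc_castSucc, Fin.snoc_last, zero_mul, add_zero]
        exact hc's z hz
    · push_neg at hA
      obtain ⟨z0, hz0U, hz0⟩ := hA
      exact caseB m U hUo hUc a ha hW z0 hz0U hz0

end WronskianAux

/-- **Identically vanishing Wronskian produces a flat annihilator of the dual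
connection, hence reducibility.**
In a flat frame `(𝐞_j)` for the connection on the disc/open connected set `U`,
the section `i(s) = ∑_j a_j(z) 𝐞_j` of the line subbundle `L ⊆ E` is nowhere
vanishing (`hs`), the `a_j` are holomorphic, and flat local sections of the dual
`(E^∨, ∇^∨)` are exactly the constant covectors `c ∈ (ℂⁿ)^∨`.  If the Wronskian
`Wr(a_1, …, a_n)` vanishes identically on `U`, then there is a *nonzero* constant
covector annihilating `i(s)` on `U` — a nonzero flat local section of the dual
pairing to zero with `L` — and the space of such covectors is *proper* (some
covector does not annihilate `i(s)`); hence `(E, ∇)` is reducible. -/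
theorem stmt_7 (n : ℕ) (hn : 1 ≤ n) (U : Set ℂ) (hUo : IsOpen U) (hUc : IsConnected U)
    (a : Fin n → ℂ → ℂ) (ha : ∀ i, AnalyticOnNhd ℂ (a i) U)
    (hs : ∀ z ∈ U, (fun j : Fin n => a j z) ≠ 0)
    (hW : ∀ z ∈ U,
      Matrix.det (Matrix.of fun i j : Fin n => iteratedDeriv (j : ℕ) (a i) z) = 0) :
    (∃ c : Fin n → ℂ, c ≠ 0 ∧ ∀ z ∈ U, ∑ j, c j * a j z = 0) ∧
    (∃ c : Fin n → ℂ, ∃ z ∈ U, ∑ j, c j * a j z ≠ 0) := by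
  constructor
  · exact key_wronskian n U hUo hUc.isPreconnected hUc.nonempty a ha hW
  · obtain ⟨z1, hz1⟩ := hUc.nonempty
    have h1 := hs z1 hz1
    have h2 : ∃ j, a j z1 ≠ 0 := by
      by_contra h
      push_neg at h
      exact h1 (funext h)
    obtain ⟨j, hj⟩ := h2
    refine ⟨Pi.single j 1, z1, hz1, ?_⟩
    rw [Finset.sum_eq_single j]
    · simpa using hj
    · intro b _ hb
      simp [Pi.single_eq_of_ne hb]
    · intro h
      exact absurd (Finset.mem_univ j) h
end
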